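/- arXiv:1802.03441 — 3 statements merged into one kernel-verified Lean document; each statement's English description precedes it below -/
import Mathlib

section
/- Under standard randomized response with parameter 0 < ε < 1 (so g_xᵀ p = ρ + γ·p(x) with ρ = 1/(T−1+e^ε), γ = (e^ε−1)/(T−1+e^ε)), the log-loss f(p) = −(1/n)∑_{x∈X} n_x·log(ρ + γ·p(x)) restricted to the probability simplex is (ε²/9 · min_x{n_x}/n)-strongly convex, i.e., its Hessian satisfies ∇²f ⪰ (ε²/9)·(min_x n_x)/n · I on the simplex. -/
theorem log_loss_strongly_convex_RR {X : Type*} [Fintype X] [DecidableEq X] [Nonempty X]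
    (ε : ℝ) (hε : 0 < ε) (hε1 : ε < 1)
    (nx : X → ℝ) (hnx : ∀ x, 0 ≤ nx x) (n : ℝ) (hn : 0 < n) (hnsum : ∑ x, nx x = n)
    (p : X → ℝ) (hp : ∀ x, 0 ≤ p x ∧ p x ≤ 1) (hpsum : ∑ x, p x = 1) :
    let T : ℝ := Fintype.card X
    let ρ := 1 / (T - 1 + Real.exp ε)
    let γ := (Real.exp ε - 1) / (T - 1 + Real.exp ε)
    (Matrix.diagonal (fun x => γ ^ 2 * nx x / (n * (ρ + γ * p x) ^ 2)) -
      ((ε ^ 2 / 9) * (Finset.univ.inf' Finset.univ_nonempty nx) / n) •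
        (1 : Matrix X X ℝ)).PosSemidef := by
  intro T ρ γ
  set c : ℝ := (ε ^ 2 / 9) * (Finset.univ.inf' Finset.univ_nonempty nx) / n with hc
  have hEq : (Matrix.diagonal (fun x => γ ^ 2 * nx x / (n * (ρ + γ * p x) ^ 2)) -
      c • (1 : Matrix X X ℝ)) =
      Matrix.diagonal (fun x => γ ^ 2 * nx x / (n * (ρ + γ * p x) ^ 2) - c) := by
    ext i j
    by_cases h : i = j <;>
      simp [Matrix.diagonal, Matrix.one_apply, h]
  rw [hEq]
  refine Matrix.posSemidef_diagonal_iff.mpr ?_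
  intro x
  -- basic positivity facts
  have hT : (1 : ℝ) ≤ T := by
    have h : (1 : ℕ) ≤ Fintype.card X := Fintype.card_pos
    show (1 : ℝ) ≤ (Fintype.card X : ℝ)
    exact_mod_cast h
  have hexp : (1 : ℝ) < Real.exp ε := by
    have := Real.exp_lt_exp.mpr hε
    simpa using this
  have hD : 0 < T - 1 + Real.exp ε := by linarith
  have hγ : 0 < γ := div_pos (by linarith) hD
  have hρ : 0 < ρ := div_pos one_pos hD
  have hq : 0 < ρ + γ * p x :=
    add_pos_of_pos_of_nonneg hρ (mul_nonneg hγ.le (hp x).1)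
  -- key inequality: ε * (ρ + γ * p x) ≤ 3 * γ
  have hexp_ge : 1 + ε ≤ Real.exp ε := by linarith [Real.add_one_le_exp ε]
  have hγdef : γ = (Real.exp ε - 1) / (T - 1 + Real.exp ε) := rfl
  have hρdef : ρ = 1 / (T - 1 + Real.exp ε) := rfl
  have hkey : ε * (ρ + γ * p x) ≤ 3 * γ := by
    have h1 : ρ + γ * p x ≤ ρ + γ := by
      nlinarith [(hp x).2, hγ]
    have h2 : ε * (ρ + γ) ≤ 3 * γ := by
      rw [hγdef, hρdef, ← add_div, ← mul_div_assoc, ← mul_div_assoc,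
        div_le_div_iff₀ hD hD]
      have he : ε * Real.exp ε ≤ 3 * (Real.exp ε - 1) := by nlinarith
      nlinarith [hD]
    calc ε * (ρ + γ * p x) ≤ ε * (ρ + γ) := by nlinarith
      _ ≤ 3 * γ := h2
  have hdiv : ε / 3 ≤ γ / (ρ + γ * p x) := by
    rw [div_le_div_iff₀ (by norm_num) hq]
    linarith
  have hsq : (ε / 3) ^ 2 ≤ (γ / (ρ + γ * p x)) ^ 2 := by
    apply pow_le_pow_left₀ (by positivity) hdiv
  have hinf : Finset.univ.inf' Finset.univ_nonempty nx ≤ nx x :=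
    Finset.inf'_le nx (Finset.mem_univ x)
  have hinf0 : 0 ≤ Finset.univ.inf' Finset.univ_nonempty nx :=
    le_trans (by
      obtain ⟨y, _, hy⟩ := Finset.exists_mem_eq_inf' (Finset.univ_nonempty) nx
      rw [hy]; exact hnx y) (le_refl _)
  have hmul : (ε / 3) ^ 2 * Finset.univ.inf' Finset.univ_nonempty nx ≤
      (γ / (ρ + γ * p x)) ^ 2 * nx x :=
    mul_le_mul hsq hinf hinf0 (by positivity)
  have hfinal : c ≤ γ ^ 2 * nx x / (n * (ρ + γ * p x) ^ 2) := by
    have h1 : c = (ε / 3) ^ 2 * Finset.univ.inf' Finset.univ_nonempty nx / n := by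
      rw [hc]; ring
    have h2 : (γ / (ρ + γ * p x)) ^ 2 * nx x / n =
        γ ^ 2 * nx x / (n * (ρ + γ * p x) ^ 2) := by
      rw [div_pow, div_mul_eq_mul_div, div_div, mul_comm ((ρ + γ * p x) ^ 2) n]
    rw [h1, ← h2]
    gcongr
  linarith
end

section
/- Let θ = (1/n)∑_{i=1}^n (1/η)(g_i^{y_i} − (1/2)𝟙) be the estimator from n independent runs of the non-symmetric mechanism on users with fixed types x₁,...,x_n, and let f = (1/n)∑_i e_{x_i} be the frequency vector. Then E[θ] = 2η·f and E[(θ − 2ηf)(θ − 2ηf)ᵀ] ⪯ (1/n)·I; consequently E[‖θ − 2ηf‖²] ≤ T/n where T = |X|. -/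
open Finset

noncomputable def chi (c : Bool) : ℝ := if c then 1 else -1

lemma chi_mul_self (c : Bool) : chi c * chi c = 1 := by cases c <;> simp [chi]

lemma chi_not (c : Bool) : chi (!c) = - chi c := by cases c <;> simp [chi]

lemma flip_invol {X : Type*} [DecidableEq X] (x : X) :
    Function.Involutive (fun b : X → Bool => Function.update b x (!b x)) := by
  intro b
  funext y
  by_cases h : y = x
  · subst h; simp
  · simp [Function.update_of_ne h]

lemma chi_sum {X : Type*} [Fintype X] [DecidableEq X] (x y : X) :
    ∑ b : X → Bool, chi (b x) * chi (b y) =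
      if x = y then (2:ℝ) ^ (Fintype.card X) else 0 := by
  by_cases h : x = y
  · subst h
    simp only [chi_mul_self, Finset.sum_const, Finset.card_univ, Fintype.card_fun,
      Fintype.card_bool, nsmul_eq_mul, mul_one, if_pos rfl]
    push_cast
    ring
  · rw [if_neg h]
    set F : (X → Bool) → ℝ := fun b => chi (b x) * chi (b y) with hF
    set e := Function.Involutive.toPerm _ (flip_invol x) with he
    have key : ∀ b, F (e b) = - F b := by
      intro b
      have hx : Function.update b x (!b x) x = (!b x) := Function.update_self _ _ _
      have hy : Function.update b x (!b x) y = b y :=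
        Function.update_of_ne (Ne.symm h) _ _
      simp only [hF, he, Function.Involutive.coe_toPerm, hx, hy, chi_not]
      ring
    have h1 : ∑ b, F (e b) = ∑ b, F b :=
      Equiv.sum_comp e F
    have h2 : ∑ b, F b = - ∑ b, F b := by
      conv_lhs => rw [← h1]
      simp only [key]
      exact Finset.sum_neg_distrib _
    linarith

section Coord
variable {X : Type*} [Fintype X] [DecidableEq X]

lemma pow_half_cancel : ((2:ℝ)) ^ (Fintype.card X) * (1/2) ^ (Fintype.card X) = 1 := by
  rw [← mul_pow]; norm_num

lemma sum_w (η : ℝ) (t : X) :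
    ∑ a : (X → Bool) × Bool,
      (1/2:ℝ) ^ (Fintype.card X) * (1/2 + η * (chi (a.1 t) * chi a.2)) = 1 := by
  rw [Fintype.sum_prod_type]
  have hb : ∀ b : X → Bool, ∑ s : Bool,
      (1/2:ℝ) ^ (Fintype.card X) * (1/2 + η * (chi (b t) * chi s))
      = (1/2:ℝ) ^ (Fintype.card X) := by
    intro b
    rw [Fintype.sum_bool]
    cases hb : b t <;> simp [chi] <;> ring
  simp only [hb, Finset.sum_const, Finset.card_univ, Fintype.card_fun, Fintype.card_bool,
    nsmul_eq_mul]
  push_cast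
  exact pow_half_cancel

lemma sum_w_h (η : ℝ) (t x : X) :
    ∑ a : (X → Bool) × Bool,
      ((1/2:ℝ) ^ (Fintype.card X) * (1/2 + η * (chi (a.1 t) * chi a.2))) *
        (chi (a.1 x) * chi a.2) =
      2 * η * (if t = x then 1 else 0) := by
  rw [Fintype.sum_prod_type]
  have hb : ∀ b : X → Bool, ∑ s : Bool,
      ((1/2:ℝ) ^ (Fintype.card X) * (1/2 + η * (chi (b t) * chi s))) * (chi (b x) * chi s)
      = ((1/2:ℝ) ^ (Fintype.card X) * (2 * η)) * (chi (b t) * chi (b x)) := by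
    intro b
    rw [Fintype.sum_bool]
    cases hb : b t <;> cases hbx : b x <;> simp [chi] <;> ring
  simp only [hb]
  rw [← Finset.mul_sum, chi_sum t x]
  by_cases h : t = x
  · rw [if_pos h, if_pos h]
    linear_combination (2 * η) * pow_half_cancel (X := X)
  · rw [if_neg h, if_neg h]; ring

lemma sum_w_hh (η : ℝ) (t x x' : X) :
    ∑ a : (X → Bool) × Bool,
      ((1/2:ℝ) ^ (Fintype.card X) * (1/2 + η * (chi (a.1 t) * chi a.2))) *
        ((chi (a.1 x) * chi a.2) * (chi (a.1 x') * chi a.2)) =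
      (if x = x' then 1 else 0) := by
  rw [Fintype.sum_prod_type]
  have hb : ∀ b : X → Bool, ∑ s : Bool,
      ((1/2:ℝ) ^ (Fintype.card X) * (1/2 + η * (chi (b t) * chi s))) *
        ((chi (b x) * chi s) * (chi (b x') * chi s))
      = (1/2:ℝ) ^ (Fintype.card X) * (chi (b x) * chi (b x')) := by
    intro b
    rw [Fintype.sum_bool]
    cases hb : b t <;> cases hbx : b x <;> cases hbx' : b x' <;> simp [chi] <;> ring
  simp only [hb]
  rw [← Finset.mul_sum, chi_sum x x']
  by_cases h : x = x'
  · rw [if_pos h, if_pos h]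
    linear_combination pow_half_cancel (X := X)
  · rw [if_neg h, if_neg h]; ring

end Coord

lemma sum_pi_prod {n : ℕ} {A : Type*} [Fintype A] (u : Fin n → A → ℝ) :
    ∑ ω : Fin n → A, ∏ i, u i (ω i) = ∏ i, ∑ a, u i a :=
  (Fintype.prod_sum (fun i a => u i a)).symm

lemma exp_one {n : ℕ} {A : Type*} [Fintype A] (v : Fin n → A → ℝ)
    (hv : ∀ k, ∑ a, v k a = 1) (i : Fin n) (F : A → ℝ) :
    ∑ ω : Fin n → A, (∏ k, v k (ω k)) * F (ω i) = ∑ a, v i a * F a := by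
  have key : ∀ ω : Fin n → A,
      (∏ k, v k (ω k)) * F (ω i)
      = ∏ k, (v k (ω k) * (if k = i then F (ω k) else 1)) := by
    intro ω
    rw [Finset.prod_mul_distrib, Finset.prod_ite_eq' Finset.univ i (fun k => F (ω k))]
    simp
  simp only [key]
  rw [sum_pi_prod (fun k a => v k a * if k = i then F a else 1)]
  rw [Finset.prod_eq_single i (fun k _ hk => by simp [if_neg hk, hv k])
    (fun h => absurd (Finset.mem_univ i) h)]
  simp

lemma exp_two {n : ℕ} {A : Type*} [Fintype A] (v : Fin n → A → ℝ)
    (hv : ∀ k, ∑ a, v k a = 1) (i j : Fin n) (F G : A → ℝ)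
    (hF : ∑ a, v i a * F a = 0) :
    ∑ ω : Fin n → A, (∏ k, v k (ω k)) * (F (ω i) * G (ω j)) =
      if i = j then ∑ a, v i a * (F a * G a) else 0 := by
  have key : ∀ ω : Fin n → A,
      (∏ k, v k (ω k)) * (F (ω i) * G (ω j))
      = ∏ k, (v k (ω k) * (if k = i then F (ω k) else 1) * (if k = j then G (ω k) else 1)) := by
    intro ω
    rw [Finset.prod_mul_distrib, Finset.prod_mul_distrib,
      Finset.prod_ite_eq' Finset.univ i (fun k => F (ω k)),
      Finset.prod_ite_eq' Finset.univ j (fun k => G (ω k))]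
    simp [mul_assoc]
  simp only [key]
  rw [sum_pi_prod (fun k a => (v k a * if k = i then F a else 1) * if k = j then G a else 1)]
  by_cases hij : i = j
  · subst hij
    rw [if_pos rfl]
    rw [Finset.prod_eq_single i (fun k _ hk => by simp [if_neg hk, hv k])
      (fun h => absurd (Finset.mem_univ i) h)]
    simp [mul_assoc]
  · rw [if_neg hij]
    apply Finset.prod_eq_zero (Finset.mem_univ i)
    simp only [if_pos rfl, if_neg hij, mul_one]
    exact hF

theorem bassily_estimator_moments {X : Type*} [Fintype X] [DecidableEq X]
    (η : ℝ) (hη0 : 0 < η) (hη : η < 1 / 2)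
    (n : ℕ) (hn : 0 < n) (xt : Fin n → X) :
    let g : (X → Bool) → X → ℝ := fun b x => if b x then 1 / 2 + η else 1 / 2 - η
    let row : (X → Bool) × Bool → X → ℝ := fun ω x =>
      if ω.2 then g ω.1 x else 1 - g ω.1 x
    let w : X → (X → Bool) × Bool → ℝ := fun t ω =>
      (1 / 2) ^ (Fintype.card X) * (if ω.2 then g ω.1 t else 1 - g ω.1 t)
    let W : (Fin n → (X → Bool) × Bool) → ℝ := fun ω => ∏ i, w (xt i) (ω i)
    let θ : (Fin n → (X → Bool) × Bool) → X → ℝ := fun ω x =>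
      (1 / n) * ∑ i, (1 / η) * (row (ω i) x - 1 / 2)
    let f : X → ℝ := fun x => ((Finset.univ.filter (fun i => xt i = x)).card : ℝ) / n
    (∀ x, ∑ ω, W ω * θ ω x = 2 * η * f x) ∧
    ((((1 : ℝ) / n) • (1 : Matrix X X ℝ) -
      Matrix.of (fun x x' =>
        ∑ ω, W ω * ((θ ω x - 2 * η * f x) * (θ ω x' - 2 * η * f x')))).PosSemidef) ∧
    (∑ ω, W ω * ∑ x, (θ ω x - 2 * η * f x) ^ 2 ≤ (Fintype.card X : ℝ) / n) := by
  intro g row w W θ f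
  have hn' : (n:ℝ) ≠ 0 := Nat.cast_ne_zero.mpr hn.ne'
  have hη' : η ≠ 0 := hη0.ne'
  -- rewrite w in chi form
  have hw : ∀ (t : X) (a : (X → Bool) × Bool),
      w t a = (1/2:ℝ) ^ (Fintype.card X) * (1/2 + η * (chi (a.1 t) * chi a.2)) := by
    rintro t ⟨b, s⟩
    cases s <;> simp [w, g, chi] <;> split_ifs <;> ring
  have hrow : ∀ (a : (X → Bool) × Bool) (x : X),
      (1/η) * (row a x - 1/2) = chi (a.1 x) * chi a.2 := by
    rintro ⟨b, s⟩ x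
    cases s <;> simp [row, g, chi] <;> split_ifs <;> field_simp <;> ring
  set D : Fin n → (X → Bool) × Bool → X → ℝ :=
    fun i a x => chi (a.1 x) * chi a.2 - 2*η*(if xt i = x then 1 else 0) with hD
  have hf : ∀ x, f x = (1/(n:ℝ)) * ∑ i, (if xt i = x then (1:ℝ) else 0) := by
    intro x
    simp only [f, Finset.card_filter]
    push_cast
    ring
  have hv : ∀ t : X, ∑ a, w t a = 1 := by
    intro t; simp only [hw]; exact sum_w η t
  have hv' : ∀ k : Fin n, ∑ a, w (xt k) a = 1 := fun k => hv (xt k)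
  have hwh : ∀ (t x : X), ∑ a, w t a * (chi (a.1 x) * chi a.2)
      = 2*η*(if t = x then 1 else 0) := by
    intro t x; simp only [hw]; exact sum_w_h η t x
  have hwhh : ∀ (t x x' : X),
      ∑ a, w t a * ((chi (a.1 x) * chi a.2) * (chi (a.1 x') * chi a.2))
      = (if x = x' then 1 else 0) := by
    intro t x x'; simp only [hw]; exact sum_w_hh η t x x'
  have hd0 : ∀ (i : Fin n) (x : X), ∑ a, w (xt i) a * D i a x = 0 := by
    intro i x
    have e : ∀ a, w (xt i) a * D i a x =
        w (xt i) a * (chi (a.1 x) * chi a.2)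
        - (2*η*(if xt i = x then 1 else 0)) * w (xt i) a := by
      intro a; simp only [hD]; ring
    simp only [e]
    rw [Finset.sum_sub_distrib, hwh, ← Finset.mul_sum, hv]
    ring
  have hd2 : ∀ (i : Fin n) (x x' : X), ∑ a, w (xt i) a * (D i a x * D i a x') =
      (if x = x' then 1 else 0)
      - 4*η^2*((if xt i = x then (1:ℝ) else 0) * (if xt i = x' then 1 else 0)) := by
    intro i x x'
    have e : ∀ a, w (xt i) a * (D i a x * D i a x') =
        w (xt i) a * ((chi (a.1 x) * chi a.2) * (chi (a.1 x') * chi a.2))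
        - (2*η*(if xt i = x' then 1 else 0)) * (w (xt i) a * (chi (a.1 x) * chi a.2))
        - (2*η*(if xt i = x then 1 else 0)) * (w (xt i) a * (chi (a.1 x') * chi a.2))
        + ((2*η*(if xt i = x then 1 else 0)) * (2*η*(if xt i = x' then 1 else 0)))
          * w (xt i) a := by
      intro a; simp only [hD]; ring
    simp only [e]
    rw [Finset.sum_add_distrib, Finset.sum_sub_distrib, Finset.sum_sub_distrib,
      ← Finset.mul_sum, ← Finset.mul_sum, ← Finset.mul_sum, hwhh, hwh, hwh, hv]
    ring
  -- Part 1
  have part1 : ∀ x, ∑ ω, W ω * θ ω x = 2 * η * f x := by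
    intro x
    have e1 : ∀ ω : Fin n → (X → Bool) × Bool, W ω * θ ω x
        = ∑ i, (1/(n:ℝ)) * ((∏ k, w (xt k) (ω k)) * (chi ((ω i).1 x) * chi (ω i).2)) := by
      intro ω
      simp only [W, θ, hrow, Finset.mul_sum]
      apply Finset.sum_congr rfl
      intros; ring
    rw [Finset.sum_congr rfl (fun ω _ => e1 ω), Finset.sum_comm]
    have e2 : ∀ i : Fin n,
        ∑ ω : Fin n → (X → Bool) × Bool,
          (1/(n:ℝ)) * ((∏ k, w (xt k) (ω k)) * (chi ((ω i).1 x) * chi (ω i).2))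
        = (1/(n:ℝ)) * (2*η*(if xt i = x then 1 else 0)) := by
      intro i
      rw [← Finset.mul_sum,
        exp_one (fun k => w (xt k)) hv' i (fun a => chi (a.1 x) * chi a.2), hwh]
    rw [Finset.sum_congr rfl (fun i _ => e2 i), hf x, ← Finset.mul_sum, ← Finset.mul_sum]
    ring
  -- key covariance identity
  have hθD : ∀ (ω : Fin n → (X → Bool) × Bool) (x : X),
      θ ω x - 2*η*f x = (1/(n:ℝ)) * ∑ i, D i (ω i) x := by
    intro ω x
    have h1 : θ ω x = (1/(n:ℝ)) * ∑ i, chi ((ω i).1 x) * chi (ω i).2 := by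
      simp only [θ, hrow]
    rw [h1, hf x]
    simp only [hD]
    rw [Finset.sum_sub_distrib, ← Finset.mul_sum]
    ring
  have hC : ∀ x x', (∑ ω, W ω * ((θ ω x - 2*η*f x) * (θ ω x' - 2*η*f x')))
      = ∑ i, ((1/(n:ℝ))^2) * ((if x = x' then 1 else 0)
          - 4*η^2*((if xt i = x then (1:ℝ) else 0) * (if xt i = x' then 1 else 0))) := by
    intro x x'
    have e1 : ∀ ω : Fin n → (X → Bool) × Bool,
        W ω * ((θ ω x - 2*η*f x) * (θ ω x' - 2*η*f x'))
        = ∑ i, ∑ j, ((1/(n:ℝ))^2) *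
            ((∏ k, w (xt k) (ω k)) * (D i (ω i) x * D j (ω j) x')) := by
      intro ω
      rw [hθD, hθD]
      have expand : (∑ i, D i (ω i) x) * (∑ j, D j (ω j) x')
          = ∑ i, ∑ j, D i (ω i) x * D j (ω j) x' :=
        Finset.sum_mul_sum _ _ _ _
      calc W ω * ((1/(n:ℝ) * ∑ i, D i (ω i) x) * (1/(n:ℝ) * ∑ j, D j (ω j) x'))
          = (1/(n:ℝ))^2 * (W ω * ((∑ i, D i (ω i) x) * (∑ j, D j (ω j) x'))) := by
            ring
        _ = ∑ i, ∑ j, ((1/(n:ℝ))^2) *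
              ((∏ k, w (xt k) (ω k)) * (D i (ω i) x * D j (ω j) x')) := by
            rw [expand]
            simp only [W, Finset.mul_sum]
    rw [Finset.sum_congr rfl (fun ω _ => e1 ω), Finset.sum_comm]
    apply Finset.sum_congr rfl
    intro i _
    rw [Finset.sum_comm]
    have e2 : ∀ j : Fin n,
        ∑ ω : Fin n → (X → Bool) × Bool, ((1/(n:ℝ))^2) *
            ((∏ k, w (xt k) (ω k)) * (D i (ω i) x * D j (ω j) x'))
        = (1/(n:ℝ))^2 * (if i = j then ∑ a, w (xt i) a * (D i a x * D j a x') else 0) := by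
      intro j
      rw [← Finset.mul_sum,
        exp_two (fun k => w (xt k)) hv' i j (fun a => D i a x) (fun a => D j a x') (hd0 i x)]
    rw [Finset.sum_congr rfl (fun j _ => e2 j), ← Finset.mul_sum,
      Finset.sum_ite_eq Finset.univ i
        (fun j => ∑ a, w (xt i) a * (D i a x * D j a x')), if_pos (Finset.mem_univ i),
      hd2 i x x']
  -- diagonal form of the deficit matrix
  have hM : (((1 : ℝ) / n) • (1 : Matrix X X ℝ) -
      Matrix.of (fun x x' =>
        ∑ ω, W ω * ((θ ω x - 2 * η * f x) * (θ ω x' - 2 * η * f x'))))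
      = Matrix.diagonal (fun x =>
          (4*η^2/(n:ℝ)^2) * ∑ i, (if xt i = x then (1:ℝ) else 0)) := by
    ext x x'
    simp only [Matrix.sub_apply, Matrix.smul_apply, Matrix.one_apply, Matrix.of_apply,
      Matrix.diagonal_apply, smul_eq_mul]
    rw [hC x x']
    by_cases h : x = x'
    · subst h
      rw [if_pos rfl, if_pos rfl]
      have hsq : ∀ i : Fin n, (if xt i = x then (1:ℝ) else 0) * (if xt i = x then 1 else 0)
          = (if xt i = x then 1 else 0) := by
        intro i; split <;> norm_num
      simp only [if_pos rfl, hsq]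
      have hsum : ∀ i : Fin n, (1/(n:ℝ))^2 * (1 - 4*η^2*(if xt i = x then (1:ℝ) else 0))
          = (1/(n:ℝ))^2 - (4*η^2/(n:ℝ)^2) * (if xt i = x then 1 else 0) := by
        intro i; field_simp
      rw [Finset.sum_congr rfl (fun i _ => hsum i), Finset.sum_sub_distrib,
        ← Finset.mul_sum, Finset.sum_const, Finset.card_univ, Fintype.card_fin,
        nsmul_eq_mul]
      field_simp
      ring
    · simp only [if_neg h]
      have hz : ∀ i : Fin n,
          (if xt i = x then (1:ℝ) else 0) * (if xt i = x' then 1 else 0) = 0 := by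
        intro i
        by_cases h1 : xt i = x
        · rw [if_neg (show ¬ xt i = x' from fun h2 => h (h1.symm.trans h2))]
          ring
        · rw [if_neg h1]; ring
      simp [hz]
  refine ⟨part1, ?_, ?_⟩
  · rw [hM]
    refine Matrix.posSemidef_diagonal_iff.mpr fun x => ?_
    apply mul_nonneg
    · positivity
    · apply Finset.sum_nonneg
      intro i _
      split <;> norm_num
  · have swap : ∑ ω, W ω * ∑ x, (θ ω x - 2*η*f x)^2
        = ∑ x, ∑ ω, W ω * ((θ ω x - 2*η*f x) * (θ ω x - 2*η*f x)) := by
      rw [Finset.sum_comm]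
      apply Finset.sum_congr rfl
      intro ω _
      rw [Finset.mul_sum]
      apply Finset.sum_congr rfl
      intros; ring
    rw [swap]
    have bound : ∀ x, ∑ ω, W ω * ((θ ω x - 2*η*f x) * (θ ω x - 2*η*f x)) ≤ 1/(n:ℝ) := by
      intro x
      rw [hC x x]
      calc ∑ i : Fin n, ((1/(n:ℝ))^2) * ((if x = x then 1 else 0)
            - 4*η^2*((if xt i = x then (1:ℝ) else 0) * (if xt i = x then 1 else 0)))
          ≤ ∑ i : Fin n, (1/(n:ℝ))^2 := by
            apply Finset.sum_le_sum
            intro i _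
            rw [if_pos rfl]
            have h1 : (0:ℝ) ≤ 4*η^2*((if xt i = x then (1:ℝ) else 0) * (if xt i = x then 1 else 0)) := by
              apply mul_nonneg (by positivity)
              split <;> norm_num
            nlinarith [sq_nonneg (1/(n:ℝ))]
        _ = 1/(n:ℝ) := by
            rw [Finset.sum_const, Finset.card_univ, Fintype.card_fin, nsmul_eq_mul]
            field_simp
    calc ∑ x, ∑ ω, W ω * ((θ ω x - 2*η*f x) * (θ ω x - 2*η*f x))
        ≤ ∑ x : X, 1/(n:ℝ) := Finset.sum_le_sum (fun x _ => bound x)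
      _ = (Fintype.card X : ℝ) / n := by
          rw [Finset.sum_const, Finset.card_univ, nsmul_eq_mul]
          ring
end

section
/- Let 0 < η < μ < 1 and let x₁,...,x_n ∈ ℝ^d have entries i.i.d. uniform in {μ−η, μ+η}. If n = Ω(d²·log²(d/(δη))/η²), then with probability at least 1−δ, for every unit vector u ∈ ℝ^d: (1/n)∑_i (x_iᵀu)² ≥ η²/3. -/
open Finset Real

lemma mgf_bound {V : Type*} [Fintype V] (g : V → ℝ) (σ : Equiv.Perm V)
    (hg : ∀ v, g v = 1 ∨ g v = -1) (hσ : ∀ v, g (σ v) = - g v) (t : ℝ) :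
    ∑ v, Real.exp (t * g v) ≤ (Fintype.card V) * Real.exp (t^2/2) := by
  have h1 : ∑ v, Real.exp (t * g v) = ∑ v, Real.exp (-(t * g v)) := by
    calc ∑ v, Real.exp (t * g v) = ∑ v, Real.exp (t * g (σ v)) := (Equiv.sum_comp σ _).symm
    _ = _ := by simp [hσ, mul_neg]
  have h2 : ∑ v, Real.exp (t * g v) = (Fintype.card V) * Real.cosh t := by
    have : (2:ℝ) * ∑ v, Real.exp (t * g v)
        = ∑ v : V, (Real.exp (t * g v) + Real.exp (-(t * g v))) := by
      rw [Finset.sum_add_distrib, ← h1]; ring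
    have h3 : ∑ v : V, (Real.exp (t * g v) + Real.exp (-(t * g v)))
        = ∑ v : V, 2 * Real.cosh t := by
      apply Finset.sum_congr rfl
      intro v _
      rcases hg v with h | h <;> simp [h, Real.cosh_eq, mul_neg] <;> ring
    rw [h3, Finset.sum_const, Finset.card_univ, nsmul_eq_mul] at this
    linarith
  rw [h2]
  have := Real.cosh_le_exp_half_sq t
  have hc : (0:ℝ) ≤ (Fintype.card V : ℝ) := by positivity
  nlinarith [this]

lemma hoeffding_count {V : Type*} [Fintype V] [DecidableEq V] (g : V → ℝ)
    (hmgf : ∀ t, ∑ v, Real.exp (t * g v) ≤ (Fintype.card V) * Real.exp (t^2/2))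
    (n : ℕ) (hn : 0 < n) (a : ℝ) (ha : 0 ≤ a) :
    ((Finset.univ.filter (fun ω : Fin n → V => a ≤ ∑ i, g (ω i))).card : ℝ)
      ≤ (Fintype.card V)^n * Real.exp (-(a^2/(2*n))) := by
  classical
  set t : ℝ := a / n with ht
  have hnR : (0:ℝ) < n := by exact_mod_cast hn
  have htn : 0 ≤ t := div_nonneg ha hnR.le
  set F := Finset.univ.filter (fun ω : Fin n → V => a ≤ ∑ i, g (ω i)) with hF
  have step1 : (F.card : ℝ) * Real.exp (t * a) ≤ ∑ ω : Fin n → V, Real.exp (t * ∑ i, g (ω i)) := by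
    have h1 : (F.card : ℝ) * Real.exp (t * a) = ∑ ω ∈ F, Real.exp (t * a) := by
      rw [Finset.sum_const, nsmul_eq_mul]
    rw [h1]
    apply le_trans (Finset.sum_le_sum ?_) (Finset.sum_le_sum_of_subset_of_nonneg (Finset.subset_univ F) ?_)
    · intro ω hω
      rw [hF, Finset.mem_filter] at hω
      exact Real.exp_le_exp.2 (mul_le_mul_of_nonneg_left hω.2 htn)
    · intro _ _ _; positivity
  have step2 : ∑ ω : Fin n → V, Real.exp (t * ∑ i, g (ω i))
      = (∑ v, Real.exp (t * g v)) ^ n := by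
    have h2 : ∀ ω : Fin n → V, Real.exp (t * ∑ i, g (ω i)) = ∏ i, Real.exp (t * g (ω i)) := by
      intro ω
      rw [Finset.mul_sum, Real.exp_sum]
    simp_rw [h2]
    rw [← Fintype.piFinset_univ, ← Finset.prod_univ_sum (fun _ : Fin n => (Finset.univ : Finset V))
        (fun _ v => Real.exp (t * g v))]
    rw [Finset.prod_const, Finset.card_univ, Fintype.card_fin]
  have step3 : (∑ v, Real.exp (t * g v)) ^ n ≤ ((Fintype.card V) * Real.exp (t^2/2)) ^ n := by
    apply pow_le_pow_left₀ ?_ (hmgf t)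
    positivity
  have step4 : ((Fintype.card V : ℝ) * Real.exp (t^2/2)) ^ n
      = (Fintype.card V : ℝ)^n * Real.exp (n * (t^2/2)) := by
    rw [mul_pow, ← Real.exp_nat_mul]
  have key : (F.card : ℝ) * Real.exp (t * a) ≤ (Fintype.card V : ℝ)^n * Real.exp (n * (t^2/2)) :=
    step1.trans (by rw [step2]; exact step3.trans_eq step4)
  have hexp : Real.exp (n * (t^2/2)) = Real.exp (-(a^2/(2*n))) * Real.exp (t * a) := by
    rw [← Real.exp_add]
    congr 1
    rw [ht]
    field_simp
    ring
  rw [hexp, ← mul_assoc] at key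
  exact le_of_mul_le_mul_right key (Real.exp_pos _)

lemma det_lemma (d n : ℕ) (hd : 0 < d) (hn : 0 < n) (μ η : ℝ) (hη : 0 < η)
    (y : Fin n → Fin d → ℝ) (hy : ∀ i k, y i k = 1 ∨ y i k = -1)
    (hA : ∀ k, (∑ i, y i k)^2 ≤ (n:ℝ)^2/(3*d))
    (hB : ∀ k l, k ≠ l → |∑ i, y i k * y i l| ≤ (n:ℝ)/(3*d))
    (u : Fin d → ℝ) (hu : ∑ k, u k ^ 2 = 1) :
    η^2/3 ≤ (1/n) * ∑ i, (∑ k, (μ + η * y i k) * u k)^2 := by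
  have hnR : (0:ℝ) < n := by exact_mod_cast hn
  have hdR : (0:ℝ) < d := by exact_mod_cast hd
  set s : ℝ := ∑ k, u k with hs
  set w : Fin n → ℝ := fun i => ∑ k, y i k * u k with hw
  set W : ℝ := ∑ i, w i with hW
  -- rewrite each inner sum
  have hinner : ∀ i, ∑ k, (μ + η * y i k) * u k = μ * s + η * w i := by
    intro i
    rw [hs, hw, Finset.mul_sum, Finset.mul_sum, ← Finset.sum_add_distrib]
    apply Finset.sum_congr rfl
    intro k _; ring
  have hexpand : ∑ i, (∑ k, (μ + η * y i k) * u k)^2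
      = n * (μ*s)^2 + 2*μ*s*η*W + η^2 * ∑ i, (w i)^2 := by
    simp_rw [hinner]
    have : ∀ i, (μ * s + η * w i)^2 = (μ*s)^2 + (2*μ*s*η) * w i + η^2 * (w i)^2 := by
      intro i; ring
    simp_rw [this]
    rw [Finset.sum_add_distrib, Finset.sum_add_distrib, Finset.sum_const, ← Finset.mul_sum,
      ← Finset.mul_sum, Finset.card_univ, Fintype.card_fin, nsmul_eq_mul, ← hW]
  -- bound W^2
  have habs : (∑ k, |u k|)^2 ≤ d := by
    have := Finset.sum_mul_sq_le_sq_mul_sq Finset.univ (fun k : Fin d => |u k|) (fun _ => 1)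
    simp only [mul_one, one_pow, sq_abs] at this
    calc (∑ k, |u k|)^2 ≤ (∑ k, u k ^2) * (∑ _k : Fin d, (1:ℝ)) := this
    _ = d := by rw [hu, Finset.sum_const, Finset.card_univ, Fintype.card_fin, nsmul_eq_mul]; ring
  have hWsq : W^2 ≤ (n:ℝ)^2/3 := by
    have hswap : W = ∑ k, (∑ i, y i k) * u k := by
      rw [hW, hw, Finset.sum_comm]
      apply Finset.sum_congr rfl
      intro k _; rw [Finset.sum_mul]
    have hcs := Finset.sum_mul_sq_le_sq_mul_sq Finset.univ (fun k : Fin d => ∑ i, y i k) u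
    have hsum : ∑ k, (∑ i, y i k)^2 ≤ (d:ℝ) * ((n:ℝ)^2/(3*d)) := by
      calc ∑ k, (∑ i, y i k)^2 ≤ ∑ _k : Fin d, (n:ℝ)^2/(3*d) :=
        Finset.sum_le_sum (fun k _ => hA k)
      _ = (d:ℝ) * ((n:ℝ)^2/(3*d)) := by
        rw [Finset.sum_const, Finset.card_univ, Fintype.card_fin, nsmul_eq_mul]
    have hd3 : (d:ℝ) * ((n:ℝ)^2/(3*d)) = (n:ℝ)^2/3 := by field_simp
    calc W^2 = (∑ k, (∑ i, y i k) * u k)^2 := by rw [hswap]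
    _ ≤ (∑ k, (∑ i, y i k)^2) * ∑ k, u k ^2 := hcs
    _ = ∑ k, (∑ i, y i k)^2 := by rw [hu, mul_one]
    _ ≤ (n:ℝ)^2/3 := hsum.trans_eq hd3
  -- bound sum w^2 from below
  have hwsq : 2*(n:ℝ)/3 ≤ ∑ i, (w i)^2 := by
    have hexp2 : ∑ i, (w i)^2 = ∑ k, ∑ l, (u k * u l) * ∑ i, y i k * y i l := by
      have h1 : ∀ i, (w i)^2 = ∑ k, ∑ l, (y i k * u k) * (y i l * u l) := by
        intro i
        rw [hw, sq, Finset.sum_mul_sum]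
      simp_rw [h1]
      rw [Finset.sum_comm]
      apply Finset.sum_congr rfl
      intro k _
      rw [Finset.sum_comm]
      apply Finset.sum_congr rfl
      intro l _
      rw [Finset.mul_sum]
      apply Finset.sum_congr rfl
      intro i _; ring
    have hdiag : ∀ k : Fin d, (u k * u k) * ∑ i, y i k * y i k = u k ^ 2 * n := by
      intro k
      have : ∀ i, y i k * y i k = 1 := by
        intro i; rcases hy i k with h | h <;> rw [h] <;> norm_num
      simp_rw [this]
      rw [Finset.sum_const, Finset.card_univ, Fintype.card_fin, nsmul_eq_mul]
      ring
    have hsplit : ∑ i, (w i)^2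
        = (∑ k, u k ^2 * n) + ∑ k, ∑ l ∈ Finset.univ.erase k, (u k * u l) * ∑ i, y i k * y i l := by
      rw [hexp2, ← Finset.sum_add_distrib]
      apply Finset.sum_congr rfl
      intro k _
      rw [← hdiag k]
      exact (Finset.add_sum_erase _ _ (Finset.mem_univ k)).symm
    have hoff : ∀ k : Fin d, ∀ l ∈ Finset.univ.erase k,
        -((|u k| * |u l|) * ((n:ℝ)/(3*d))) ≤ (u k * u l) * ∑ i, y i k * y i l := by
      intro k l hl
      have hkl : l ≠ k := Finset.ne_of_mem_erase hl
      have hb := hB k l (Ne.symm hkl)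
      have h1 : |(u k * u l) * ∑ i, y i k * y i l| ≤ (|u k| * |u l|) * ((n:ℝ)/(3*d)) := by
        rw [abs_mul, abs_mul]
        apply mul_le_mul_of_nonneg_left hb (by positivity)
      linarith [neg_abs_le ((u k * u l) * ∑ i, y i k * y i l)]
    have hoffsum : -((n:ℝ)/3) ≤ ∑ k, ∑ l ∈ Finset.univ.erase k, (u k * u l) * ∑ i, y i k * y i l := by
      have h1 : ∑ k, ∑ l ∈ Finset.univ.erase k, -((|u k| * |u l|) * ((n:ℝ)/(3*d)))
          ≤ ∑ k, ∑ l ∈ Finset.univ.erase k, (u k * u l) * ∑ i, y i k * y i l :=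
        Finset.sum_le_sum (fun k _ => Finset.sum_le_sum (hoff k))
      have h2 : ∑ k, ∑ l ∈ Finset.univ.erase k, ((|u k| * |u l|) * ((n:ℝ)/(3*d)))
          ≤ (n:ℝ)/3 := by
        have h3 : ∀ k : Fin d, ∑ l ∈ Finset.univ.erase k, ((|u k| * |u l|) * ((n:ℝ)/(3*d)))
            ≤ ∑ l, ((|u k| * |u l|) * ((n:ℝ)/(3*d))) := by
          intro k
          apply Finset.sum_le_sum_of_subset_of_nonneg (Finset.erase_subset _ _)
          intro l _ _; positivity
        calc ∑ k, ∑ l ∈ Finset.univ.erase k, ((|u k| * |u l|) * ((n:ℝ)/(3*d)))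
            ≤ ∑ k, ∑ l, ((|u k| * |u l|) * ((n:ℝ)/(3*d))) := Finset.sum_le_sum (fun k _ => h3 k)
        _ = (∑ k, |u k|)^2 * ((n:ℝ)/(3*d)) := by
            rw [sq, Finset.sum_mul_sum, Finset.sum_mul]
            apply Finset.sum_congr rfl; intro k _
            rw [Finset.sum_mul]
        _ ≤ (d:ℝ) * ((n:ℝ)/(3*d)) := by
            apply mul_le_mul_of_nonneg_right habs (by positivity)
        _ = (n:ℝ)/3 := by field_simp
      calc -((n:ℝ)/3) ≤ -∑ k, ∑ l ∈ Finset.univ.erase k, ((|u k| * |u l|) * ((n:ℝ)/(3*d))) := by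
            linarith
      _ = ∑ k, ∑ l ∈ Finset.univ.erase k, -((|u k| * |u l|) * ((n:ℝ)/(3*d))) := by
            rw [← Finset.sum_neg_distrib]
            apply Finset.sum_congr rfl; intro k _; rw [← Finset.sum_neg_distrib]
      _ ≤ _ := h1
    have hdiagsum : ∑ k, u k ^2 * n = (n:ℝ) := by
      rw [← Finset.sum_mul, hu, one_mul]
    rw [hsplit, hdiagsum]
    linarith
  -- combine
  have hkey : (n:ℝ) * (μ*s)^2 + 2*μ*s*η*W + η^2 * (W^2/n) ≥ 0 := by
    have : (n:ℝ) * (μ*s + η*(W/n))^2 = n * (μ*s)^2 + 2*μ*s*η*W + η^2 * (W^2/n) := by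
      field_simp
      ring
    nlinarith [sq_nonneg (μ*s + η*(W/n)), hnR]
  have hfinal : (n:ℝ) * (η^2/3) ≤ ∑ i, (∑ k, (μ + η * y i k) * u k)^2 := by
    rw [hexpand]
    have h1 : η^2 * (W^2/n) ≤ η^2 * ((n:ℝ)/3) := by
      apply mul_le_mul_of_nonneg_left _ (by positivity)
      rw [div_le_iff₀ hnR]
      calc W^2 ≤ (n:ℝ)^2/3 := hWsq
      _ = (n:ℝ)/3 * n := by ring
    have h2 : η^2 * (2*(n:ℝ)/3) ≤ η^2 * ∑ i, (w i)^2 :=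
      mul_le_mul_of_nonneg_left hwsq (by positivity)
    nlinarith
  have hmono : (1/(n:ℝ)) * ((n:ℝ) * (η^2/3)) ≤ (1/(n:ℝ)) * ∑ i, (∑ k, (μ + η * y i k) * u k)^2 :=
    mul_le_mul_of_nonneg_left hfinal (by positivity)
  calc η^2/3 = (1/(n:ℝ)) * ((n:ℝ)*(η^2/3)) := by field_simp
  _ ≤ _ := hmono

lemma det_one (n : ℕ) (hn : 0 < n) (μ η : ℝ) (hη : 0 < η) (hμ : η < μ)
    (y : Fin n → ℝ) (hy : ∀ i, y i = 1 ∨ y i = -1)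
    (hS : -((4:ℝ)/5 * n) ≤ ∑ i, y i)
    (u : Fin 1 → ℝ) (hu : ∑ k, u k ^ 2 = 1) :
    η^2/3 ≤ (1/n) * ∑ i, ((μ + η * y i) * u 0)^2 := by
  have hnR : (0:ℝ) < n := by exact_mod_cast hn
  have hu0 : u 0 ^ 2 = 1 := by
    rw [← hu, Fin.sum_univ_one]
  have hexp : ∑ i, ((μ + η * y i) * u 0)^2 = ∑ i, (μ + η * y i)^2 := by
    apply Finset.sum_congr rfl
    intro i _
    rw [mul_pow, hu0, mul_one]
  have hysq : ∀ i, (y i)^2 = 1 := by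
    intro i; rcases hy i with h | h <;> rw [h] <;> norm_num
  have hexp2 : ∑ i, (μ + η * y i)^2 = n * μ^2 + 2*μ*η*(∑ i, y i) + n * η^2 := by
    have : ∀ i, (μ + η * y i)^2 = μ^2 + (2*μ*η) * y i + η^2 * (y i)^2 := by
      intro i; ring
    simp_rw [this, hysq]
    rw [Finset.sum_add_distrib, Finset.sum_add_distrib, Finset.sum_const, Finset.sum_const,
      ← Finset.mul_sum, Finset.card_univ, Fintype.card_fin, nsmul_eq_mul]
    ring
  have hkey : (n:ℝ) * (η^2/3) ≤ ∑ i, (μ + η * y i)^2 := by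
    rw [hexp2]
    have h1 : 2*μ*η*(∑ i, y i) ≥ 2*μ*η*(-((4:ℝ)/5 * n)) :=
      mul_le_mul_of_nonneg_left hS (by nlinarith [hη.trans hμ])
    nlinarith [sq_nonneg (μ - (4/5)*η), hnR, sq_nonneg η, mul_pos hη (hη.trans hμ)]
  rw [hexp]
  have hmono : (1/(n:ℝ)) * ((n:ℝ) * (η^2/3)) ≤ (1/(n:ℝ)) * ∑ i, (μ + η * y i)^2 :=
    mul_le_mul_of_nonneg_left hkey (by positivity)
  calc η^2/3 = (1/(n:ℝ)) * ((n:ℝ)*(η^2/3)) := by field_simp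
  _ ≤ _ := hmono

lemma arith2 (d n : ℕ) (hd : 2 ≤ d) (η δ : ℝ) (hη : 0 < η) (hη1 : η < 1) (hδ : 0 < δ)
    (hδ1 : δ < 1) (hn : 200 * d^2 * (Real.log (d/(δ*η)))^2 / η^2 ≤ n) :
    4 * (d:ℝ)^2 * Real.exp (-((n:ℝ)/(18*d^2))) ≤ δ := by
  set L := Real.log ((d:ℝ)/(δ*η)) with hLdef
  have hdR : (2:ℝ) ≤ d := by exact_mod_cast hd
  have hδη : 0 < δ * η := mul_pos hδ hη
  have hδη1 : δ * η < 1 := by nlinarith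
  have hL2 : Real.log 2 ≤ L := by
    apply Real.log_le_log (by norm_num)
    calc (2:ℝ) ≤ d := hdR
    _ ≤ d / (δ*η) := by rw [le_div_iff₀ hδη]; nlinarith
  have hLd : Real.log d ≤ L := by
    apply Real.log_le_log (by linarith)
    rw [le_div_iff₀ hδη]; nlinarith
  have hLδ : -Real.log δ ≤ L := by
    rw [← Real.log_inv]
    apply Real.log_le_log (by positivity)
    rw [inv_eq_one_div, div_le_div_iff₀ hδ hδη]
    nlinarith
  have hlog2 : (0.69:ℝ) < Real.log 2 := by
    have := Real.log_two_gt_d9; linarith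
  have hL0 : 0 < L := lt_of_lt_of_le (by linarith) hL2
  have hη2 : η^2 ≤ 1 := by nlinarith
  have hnL : 200 * (d:ℝ)^2 * L^2 ≤ n := by
    calc 200*(d:ℝ)^2*L^2 ≤ 200*(d:ℝ)^2*L^2/η^2 := by
          rw [le_div_iff₀ (by positivity)]
          nlinarith [sq_nonneg ((d:ℝ)*L), sq_nonneg L]
    _ ≤ (n:ℝ) := hn
  have hlog4 : Real.log 4 = 2 * Real.log 2 := by
    rw [show (4:ℝ) = 2^2 by norm_num, Real.log_pow]; push_cast; ring
  have hkey : Real.log (4*(d:ℝ)^2) - Real.log δ ≤ (n:ℝ)/(18*d^2) := by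
    have h1 : Real.log (4*(d:ℝ)^2) = Real.log 4 + 2 * Real.log d := by
      rw [Real.log_mul (by norm_num) (by positivity), Real.log_pow]; push_cast; ring
    have h2 : (100/9:ℝ)*L^2 ≤ (n:ℝ)/(18*d^2) := by
      rw [le_div_iff₀ (by positivity)]
      nlinarith [hnL]
    have hsq : 0.69 * L ≤ L^2 := by nlinarith
    rw [h1, hlog4]
    linarith
  have hpos : (0:ℝ) < 4*(d:ℝ)^2 := by positivity
  have h3 : Real.exp (-((n:ℝ)/(18*d^2))) ≤ δ / (4*(d:ℝ)^2) := by
    rw [← Real.exp_log (show (0:ℝ) < δ / (4*(d:ℝ)^2) by positivity), Real.exp_le_exp,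
      Real.log_div (ne_of_gt hδ) (ne_of_gt hpos)]
    linarith
  calc 4*(d:ℝ)^2 * Real.exp (-((n:ℝ)/(18*d^2))) ≤ 4*(d:ℝ)^2 * (δ / (4*(d:ℝ)^2)) :=
        mul_le_mul_of_nonneg_left h3 (by positivity)
  _ = δ := by field_simp

lemma arith1 (n : ℕ) (hn1 : 1 ≤ n) (η δ : ℝ) (hη : 0 < η) (hη1 : η < 1) (hδ : 0 < δ) (hδ1 : δ < 1)
    (hn : 200 * (Real.log (1/(δ*η)))^2 / η^2 ≤ n) :
    Real.exp (-((8:ℝ)/25 * n)) ≤ δ := by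
  set L := Real.log (1/(δ*η)) with hLdef
  have hδη : 0 < δ * η := mul_pos hδ hη
  have hb : -Real.log δ ≤ L := by
    rw [← Real.log_inv]
    apply Real.log_le_log (by positivity)
    rw [inv_eq_one_div, div_le_div_iff₀ hδ hδη]
    nlinarith
  have hb0 : 0 ≤ -Real.log δ := by
    have := Real.log_nonpos hδ.le hδ1.le
    linarith
  have hη2 : η^2 ≤ 1 := by nlinarith
  have hnR : (1:ℝ) ≤ n := by exact_mod_cast hn1
  have hnL : 200*L^2 ≤ n := by
    calc 200*L^2 ≤ 200*L^2/η^2 := by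
          rw [le_div_iff₀ (by positivity)]; nlinarith [sq_nonneg L]
    _ ≤ (n:ℝ) := by
          calc 200*L^2/η^2 = 200*(1:ℝ)^2*L^2/η^2 := by ring
          _ ≤ (n:ℝ) := by simpa using hn
  have hkey : -Real.log δ ≤ (8:ℝ)/25 * n := by
    rcases le_or_gt (-Real.log δ) (8/25) with h | h
    · nlinarith
    · have hL : (8:ℝ)/25 < L := lt_of_lt_of_le h hb
      have hL0 : (0:ℝ) < L := by linarith
      nlinarith [mul_lt_mul_of_pos_left hL hL0]
  rw [← Real.exp_log hδ, Real.exp_le_exp]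
  linarith

lemma aux1 (n d : ℝ) (hn : 0 < n) (hd : 1 ≤ d) :
    n/(18*d^2) ≤ (n/Real.sqrt (3*d))^2/(2*n) := by
  have hd0 : (0:ℝ) < d := by linarith
  have h1 : (n/Real.sqrt (3*d))^2 = n^2/(3*d) := by
    rw [div_pow, Real.sq_sqrt (by positivity)]
  rw [h1]
  have h2 : n^2/(3*d)/(2*n) = n/(6*d) := by field_simp; ring
  rw [h2, div_le_div_iff₀ (by positivity) (by positivity)]
  have h6 : (0:ℝ) ≤ 18*d^2 - 6*d := by nlinarith
  nlinarith [mul_nonneg hn.le h6]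
lemma aux2 (n d : ℝ) (hn : 0 < n) (hd : 1 ≤ d) :
    n/(18*d^2) ≤ (n/(3*d))^2/(2*n) := by
  have hd0 : (0:ℝ) < d := by linarith
  have h2 : (n/(3*d))^2/(2*n) = n/(18*d^2) := by rw [div_pow]; field_simp; ring
  rw [h2]

open Classical in
theorem random_pm_vectors_least_eigenvalue :
    ∃ C : ℝ, 0 < C ∧ ∀ (d n : ℕ) (μ η δ : ℝ),
      0 < η → η < μ → μ < 1 → 0 < δ →
      C * d ^ 2 * (Real.log (d / (δ * η))) ^ 2 / η ^ 2 ≤ n →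
      1 - δ ≤ ∑ ω : Fin n → Fin d → Bool,
        if (∀ u : Fin d → ℝ, ∑ k, u k ^ 2 = 1 →
            η ^ 2 / 3 ≤ (1 / n) * ∑ i, (∑ k, (if ω i k then μ + η else μ - η) * u k) ^ 2)
        then ((1 : ℝ) / 2) ^ (n * d) else 0 := by
  classical
  refine ⟨200, by norm_num, ?_⟩
  intro d n μ η δ hη hημ hμ1 hδ hn
  set Cond : (Fin n → Fin d → Bool) → Prop := fun ω =>
    (∀ u : Fin d → ℝ, ∑ k, u k ^ 2 = 1 →
      η ^ 2 / 3 ≤ (1 / n) * ∑ i, (∑ k, (if ω i k then μ + η else μ - η) * u k) ^ 2) with hCond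
  show 1 - δ ≤ ∑ ω : Fin n → Fin d → Bool, if Cond ω then ((1 : ℝ) / 2) ^ (n * d) else 0
  -- trivial nonnegativity bound
  have hnonneg : (0:ℝ) ≤ ∑ ω : Fin n → Fin d → Bool,
      if Cond ω then ((1 : ℝ) / 2) ^ (n * d) else 0 := by
    apply Finset.sum_nonneg
    intro ω _
    split <;> positivity
  by_cases hδ1 : 1 ≤ δ
  · linarith
  push_neg at hδ1
  rcases Nat.eq_zero_or_pos d with rfl | hd
  · -- d = 0 : condition vacuous
    have hcond0 : ∀ ω : Fin n → Fin 0 → Bool, Cond ω := by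
      intro ω u hu
      simp at hu
    have h1 : ∑ _ω : Fin n → Fin 0 → Bool, ((1:ℝ)/2)^(n*0) = 1 := by simp
    calc 1-δ ≤ 1 := by linarith
    _ = _ :=
      Eq.symm (Eq.trans (Finset.sum_congr rfl fun ω _ => if_pos (hcond0 ω)) h1)
  -- main case d ≥ 1
  have hμ0 : 0 < μ := hη.trans hημ
  have hη1 : η < 1 := hημ.trans hμ1
  have hδη : 0 < δ * η := mul_pos hδ hη
  have hδη1 : δ * η < 1 := by nlinarith
  have hdR : (1:ℝ) ≤ d := by exact_mod_cast hd
  have hL0 : 0 < Real.log ((d:ℝ) / (δ * η)) := by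
    apply Real.log_pos
    rw [lt_div_iff₀ hδη]; nlinarith
  have hnR : (0:ℝ) < n := by
    refine lt_of_lt_of_le ?_ hn
    have h1 : (0:ℝ) < 200 * (d:ℝ)^2 := by positivity
    positivity
  have hn0 : 0 < n := by exact_mod_cast hnR
  -- basics about g and flips
  set g : Fin d → (Fin d → Bool) → ℝ := fun k v => if v k then 1 else -1 with hgdef
  have hgpm : ∀ k v, g k v = 1 ∨ g k v = -1 := by
    intro k v; by_cases h : v k <;> simp [hgdef, h]
  have hginv : ∀ k : Fin d,
      Function.Involutive (fun v : Fin d → Bool => Function.update v k (!(v k))) := by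
    intro k v
    simp
  set σ : Fin d → Equiv.Perm (Fin d → Bool) :=
    fun k => Function.Involutive.toPerm _ (hginv k) with hσdef
  have hσapp : ∀ k v, σ k v = Function.update v k (!(v k)) := fun k v => rfl
  have hgflip : ∀ k v, g k (σ k v) = -(g k v) := by
    intro k v
    have h1 : (σ k v) k = !(v k) := by rw [hσapp]; exact Function.update_self _ _ _
    by_cases h : v k <;> simp [hgdef, h1, h]
  have hgother : ∀ k l : Fin d, l ≠ k → ∀ v, g l (σ k v) = g l v := by
    intro k l hlk v
    have h1 : (σ k v) l = v l := by rw [hσapp]; exact Function.update_of_ne hlk _ _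
    simp [hgdef, h1]
  have hcardV : (Fintype.card (Fin d → Bool)) = 2^d := by simp
  have hcardpow : ((Fintype.card (Fin d → Bool)):ℝ)^n = (2:ℝ)^(n*d) := by
    rw [hcardV]; push_cast; rw [← pow_mul, Nat.mul_comm]
  have hNpos : (0:ℝ) < (2:ℝ)^(n*d) := by positivity
  -- generic single-event bound
  have hevent : ∀ (f : (Fin d → Bool) → ℝ) (k : Fin d),
      (∀ v, f v = 1 ∨ f v = -1) → (∀ v, f (σ k v) = -(f v)) →
      ∀ a : ℝ, 0 ≤ a →
      ((Finset.univ.filter (fun ω : Fin n → Fin d → Bool => a ≤ ∑ i, f (ω i))).card : ℝ)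
        ≤ (2:ℝ)^(n*d) * Real.exp (-(a^2/(2*n))) := by
    intro f k hf hfσ a ha
    have hm : ∀ t, ∑ v, Real.exp (t * f v)
        ≤ (Fintype.card (Fin d → Bool)) * Real.exp (t^2/2) :=
      fun t => mgf_bound f (σ k) hf hfσ t
    have := hoeffding_count f hm n hn0 a ha
    rwa [hcardpow] at this
  -- the common final step
  suffices hbad : ((Finset.univ.filter (fun ω : Fin n → Fin d → Bool => ¬ Cond ω)).card : ℝ)
      ≤ δ * 2^(n*d) by
    have htot := Finset.card_filter_add_card_filter_not
      (s := (Finset.univ : Finset (Fin n → Fin d → Bool))) (p := Cond)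
    have hcardΩ : Fintype.card (Fin n → Fin d → Bool) = 2^(n*d) := by
      simp [← pow_mul, Nat.mul_comm]
    rw [Finset.card_univ, hcardΩ] at htot
    have hsum : ∑ ω : Fin n → Fin d → Bool,
        (if Cond ω then ((1 : ℝ) / 2) ^ (n * d) else 0)
        = ((Finset.univ.filter Cond).card : ℝ) * ((1:ℝ)/2)^(n*d) := by
      rw [Finset.sum_ite, Finset.sum_const, Finset.sum_const_zero, add_zero, nsmul_eq_mul]
    rw [hsum]
    have hhalf : ((1:ℝ)/2)^(n*d) = ((2:ℝ)^(n*d))⁻¹ := by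
      rw [div_pow, one_pow, one_div]
    have hc2 : (1 - δ) * (2:ℝ)^(n*d) ≤ ((Finset.univ.filter Cond).card : ℝ) := by
      have hcast : ((Finset.univ.filter Cond).card : ℝ)
          + ((Finset.univ.filter (fun ω => ¬ Cond ω)).card : ℝ) = (2:ℝ)^(n*d) := by
        exact_mod_cast congrArg (Nat.cast (R := ℝ)) htot
      linarith
    rw [hhalf]
    calc (1:ℝ) - δ = (1-δ) * (2:ℝ)^(n*d) * ((2:ℝ)^(n*d))⁻¹ := by field_simp
    _ ≤ ((Finset.univ.filter Cond).card : ℝ) * ((2:ℝ)^(n*d))⁻¹ :=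
        mul_le_mul_of_nonneg_right hc2 (by positivity)
  rcases Nat.lt_or_ge d 2 with hdlt | hd2
  · -- d = 1
    have hd1 : d = 1 := by omega
    subst hd1
    set E := Finset.univ.filter
      (fun ω : Fin n → Fin 1 → Bool => (4:ℝ)/5 * n ≤ ∑ i, -(g 0 (ω i))) with hE
    have hsub : Finset.univ.filter (fun ω : Fin n → Fin 1 → Bool => ¬ Cond ω) ⊆ E := by
      intro ω hω
      rw [Finset.mem_filter] at hω
      rw [hE, Finset.mem_filter]
      refine ⟨Finset.mem_univ _, ?_⟩
      by_contra hnot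
      push_neg at hnot
      apply hω.2
      intro u hu
      have hneg : ∑ i, -(g 0 (ω i)) = -∑ i, g 0 (ω i) := by
        rw [← Finset.sum_neg_distrib]
      have hS : -((4:ℝ)/5 * n) ≤ ∑ i, g 0 (ω i) := by
        rw [hneg] at hnot; linarith
      have hrw : ∀ i : Fin n, ∑ k : Fin 1, (if ω i k then μ + η else μ - η) * u k
          = (μ + η * (g 0 (ω i))) * u 0 := by
        intro i
        rw [Fin.sum_univ_one]
        congr 1
        by_cases h : ω i 0 <;> simp [hgdef, h] <;> ring
      simp only [hrw]
      exact det_one n hn0 μ η hη hημ (fun i => g 0 (ω i)) (fun i => hgpm 0 (ω i)) hS u hu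
    have h1 : ((Finset.univ.filter (fun ω : Fin n → Fin 1 → Bool => ¬ Cond ω)).card : ℝ)
        ≤ (E.card : ℝ) := by exact_mod_cast Finset.card_le_card hsub
    have h2 : (E.card : ℝ) ≤ (2:ℝ)^(n*1) * Real.exp (-(((4:ℝ)/5*n)^2/(2*n))) := by
      apply hevent (fun v => -(g 0 v)) 0 ?_ ?_ ((4:ℝ)/5*n) (by positivity)
      · intro v; rcases hgpm 0 v with h | h <;> simp [h]
      · intro v; simp only [hgflip]
    have h3 : ((4:ℝ)/5*n)^2/(2*n) = 8/25*n := by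
      field_simp
      ring
    have h4 : Real.exp (-((8:ℝ)/25*n)) ≤ δ := by
      apply arith1 n hn0 η δ hη hη1 hδ hδ1
      have := hn
      push_cast at this ⊢
      linarith
    calc ((Finset.univ.filter (fun ω : Fin n → Fin 1 → Bool => ¬ Cond ω)).card : ℝ)
        ≤ (2:ℝ)^(n*1) * Real.exp (-(((4:ℝ)/5*n)^2/(2*n))) := h1.trans h2
    _ = Real.exp (-((8:ℝ)/25*n)) * (2:ℝ)^(n*1) := by rw [h3]; ring
    _ ≤ δ * 2^(n*1) := mul_le_mul_of_nonneg_right h4 (by positivity)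
  · -- d ≥ 2
    have hdR2 : (2:ℝ) ≤ d := by exact_mod_cast hd2
    set a1 : ℝ := (n:ℝ)/Real.sqrt (3*d) with ha1
    set a2 : ℝ := (n:ℝ)/(3*d) with ha2
    have ha1nn : 0 ≤ a1 := by
      apply div_nonneg (by positivity) (Real.sqrt_nonneg _)
    have ha2nn : 0 ≤ a2 := by positivity
    have ha1sq : a1^2 = (n:ℝ)^2/(3*(d:ℝ)) := by
      rw [ha1, div_pow, Real.sq_sqrt (by positivity)]
    set E1p : Fin d → Finset (Fin n → Fin d → Bool) :=
      fun k => Finset.univ.filter (fun ω => a1 ≤ ∑ i, g k (ω i)) with hE1p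
    set E1m : Fin d → Finset (Fin n → Fin d → Bool) :=
      fun k => Finset.univ.filter (fun ω => a1 ≤ ∑ i, -(g k (ω i))) with hE1m
    set E2p : Fin d × Fin d → Finset (Fin n → Fin d → Bool) :=
      fun p => Finset.univ.filter (fun ω => a2 ≤ ∑ i, g p.1 (ω i) * g p.2 (ω i)) with hE2p
    set E2m : Fin d × Fin d → Finset (Fin n → Fin d → Bool) :=
      fun p => Finset.univ.filter (fun ω => a2 ≤ ∑ i, -(g p.1 (ω i) * g p.2 (ω i))) with hE2m
    set Pne := (Finset.univ : Finset (Fin d × Fin d)).filter (fun p => p.1 ≠ p.2) with hPne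
    set A1 := Finset.univ.biUnion (fun k => E1p k ∪ E1m k) with hA1
    set A2 := Pne.biUnion (fun p => E2p p ∪ E2m p) with hA2
    have hsub : Finset.univ.filter (fun ω : Fin n → Fin d → Bool => ¬ Cond ω) ⊆
        A1 ∪ A2 := by
      rw [hA1, hA2]
      intro ω hω
      rw [Finset.mem_filter] at hω
      by_contra hnot
      simp only [Finset.mem_union, Finset.mem_biUnion, Finset.mem_filter, Finset.mem_univ,
        true_and, not_or, not_exists, not_le, hE1p, hE1m, hE2p, hE2m, hPne] at hnot
      apply hω.2
      intro u hu
      have hA : ∀ k, (∑ i, g k (ω i))^2 ≤ (n:ℝ)^2/(3*(d:ℝ)) := by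
        intro k
        have h1 := (hnot.1 k).1
        have h2 := (hnot.1 k).2
        have hneg : ∑ i, -(g k (ω i)) = -∑ i, g k (ω i) := by
          rw [← Finset.sum_neg_distrib]
        rw [hneg] at h2
        rw [← ha1sq]
        apply sq_le_sq' (by linarith) (by linarith)
      have hB : ∀ k l, k ≠ l → |∑ i, g k (ω i) * g l (ω i)| ≤ (n:ℝ)/(3*(d:ℝ)) := by
        intro k l hkl
        have h12 : ¬(a2 ≤ ∑ i, g k (ω i) * g l (ω i) ∨
            a2 ≤ ∑ i, -(g k (ω i) * g l (ω i))) := fun hor => hnot.2 (k, l) ⟨hkl, hor⟩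
        push_neg at h12
        have h1 := h12.1
        have h2 := h12.2
        replace h1 := le_of_lt h1
        replace h2 := le_of_lt h2
        have hneg : ∑ i, -(g k (ω i) * g l (ω i)) = -∑ i, g k (ω i) * g l (ω i) := by
          rw [← Finset.sum_neg_distrib]
        rw [hneg] at h2
        rw [abs_le]
        constructor <;> [linarith; linarith]
      have hrw : ∀ i : Fin n, ∑ k, (if ω i k then μ + η else μ - η) * u k
          = ∑ k, (μ + η * g k (ω i)) * u k := by
        intro i
        apply Finset.sum_congr rfl
        intro k _
        congr 1
        by_cases h : ω i k <;> simp [hgdef, h] <;> ring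
      simp only [hrw]
      exact det_lemma d n hd hn0 μ η hη (fun i k => g k (ω i)) (fun i k => hgpm k (ω i))
        hA hB u hu
    set M : ℝ := (2:ℝ)^(n*d) * Real.exp (-((n:ℝ)/(18*(d:ℝ)^2))) with hM
    have hMnn : 0 ≤ M := by positivity
    have hexpmono : ∀ a : ℝ, 0 ≤ a → (n:ℝ)/(18*(d:ℝ)^2) ≤ a^2/(2*n) →
        (2:ℝ)^(n*d) * Real.exp (-(a^2/(2*n))) ≤ M := by
      intro a _ h
      apply mul_le_mul_of_nonneg_left _ (by positivity)
      rw [Real.exp_le_exp]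
      linarith
    have hcard1p : ∀ k, ((E1p k).card : ℝ) ≤ M := by
      intro k
      exact le_trans (hevent (g k) k (hgpm k) (hgflip k) a1 ha1nn)
        (hexpmono a1 ha1nn (aux1 (n:ℝ) (d:ℝ) hnR hdR))
    have hcard1m : ∀ k, ((E1m k).card : ℝ) ≤ M := by
      intro k
      refine le_trans (hevent (fun v => -(g k v)) k ?_ ?_ a1 ha1nn) (hexpmono a1 ha1nn ?_)
      · intro v; rcases hgpm k v with h | h <;> simp [h]
      · intro v; simp only [hgflip]
      · exact aux1 (n:ℝ) (d:ℝ) hnR hdR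
    have ha2sqle : (n:ℝ)/(18*(d:ℝ)^2) ≤ a2^2/(2*n) := aux2 (n:ℝ) (d:ℝ) hnR hdR
    have hcard2p : ∀ p : Fin d × Fin d, p.1 ≠ p.2 → ((E2p p).card : ℝ) ≤ M := by
      intro p hp
      refine le_trans (hevent (fun v => g p.1 v * g p.2 v) p.1 ?_ ?_ a2 ha2nn)
        (hexpmono a2 ha2nn ha2sqle)
      · intro v
        rcases hgpm p.1 v with h1 | h1 <;> rcases hgpm p.2 v with h2 | h2 <;> simp [h1, h2]
      · intro v
        simp only [hgflip, hgother p.1 p.2 (Ne.symm hp)]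
        ring
    have hcard2m : ∀ p : Fin d × Fin d, p.1 ≠ p.2 → ((E2m p).card : ℝ) ≤ M := by
      intro p hp
      refine le_trans (hevent (fun v => -(g p.1 v * g p.2 v)) p.1 ?_ ?_ a2 ha2nn)
        (hexpmono a2 ha2nn ha2sqle)
      · intro v
        rcases hgpm p.1 v with h1 | h1 <;> rcases hgpm p.2 v with h2 | h2 <;> simp [h1, h2]
      · intro v
        simp only [hgflip, hgother p.1 p.2 (Ne.symm hp)]
        ring
    -- counting
    have hcount1 : (A1.card : ℝ) ≤ (d : ℝ) * (2 * M) := by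
      rw [hA1]
      have h1 : (Finset.univ.biUnion fun k => E1p k ∪ E1m k).card
          ≤ ∑ k : Fin d, ((E1p k).card + (E1m k).card) := by
        refine le_trans (Finset.card_biUnion_le) (Finset.sum_le_sum fun k _ =>
          Finset.card_union_le _ _)
      calc ((Finset.univ.biUnion fun k => E1p k ∪ E1m k).card : ℝ)
          ≤ ((∑ k : Fin d, ((E1p k).card + (E1m k).card) : ℕ) : ℝ) := by exact_mod_cast h1
      _ = ∑ k : Fin d, (((E1p k).card : ℝ) + ((E1m k).card : ℝ)) := by push_cast; ring
      _ ≤ ∑ _k : Fin d, (2 * M) := Finset.sum_le_sum fun k _ => by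
            have := hcard1p k; have := hcard1m k; linarith
      _ = (d : ℝ) * (2 * M) := by
            rw [Finset.sum_const, Finset.card_univ, Fintype.card_fin, nsmul_eq_mul]
    have hcount2 : (A2.card : ℝ) ≤ (d : ℝ)^2 * (2 * M) := by
      rw [hA2]
      have h1 : (Pne.biUnion fun p => E2p p ∪ E2m p).card
          ≤ ∑ p ∈ Pne, ((E2p p).card + (E2m p).card) := by
        refine le_trans (Finset.card_biUnion_le) (Finset.sum_le_sum fun p _ =>
          Finset.card_union_le _ _)
      have hPle : (Pne.card : ℝ) ≤ (d : ℝ)^2 := by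
        have : Pne.card ≤ (Finset.univ : Finset (Fin d × Fin d)).card :=
          Finset.card_le_card (Finset.filter_subset _ _)
        rw [Finset.card_univ] at this
        calc (Pne.card : ℝ) ≤ (Fintype.card (Fin d × Fin d) : ℝ) := by exact_mod_cast this
        _ = (d:ℝ)^2 := by simp [Fintype.card_prod]; ring
      calc ((Pne.biUnion fun p => E2p p ∪ E2m p).card : ℝ)
          ≤ ((∑ p ∈ Pne, ((E2p p).card + (E2m p).card) : ℕ) : ℝ) := by exact_mod_cast h1
      _ = ∑ p ∈ Pne, (((E2p p).card : ℝ) + ((E2m p).card : ℝ)) := by push_cast; ring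
      _ ≤ ∑ _p ∈ Pne, (2 * M) := by
            apply Finset.sum_le_sum
            intro p hp
            rw [hPne, Finset.mem_filter] at hp
            have := hcard2p p hp.2; have := hcard2m p hp.2; linarith
      _ = (Pne.card : ℝ) * (2 * M) := by rw [Finset.sum_const, nsmul_eq_mul]
      _ ≤ (d : ℝ)^2 * (2 * M) := mul_le_mul_of_nonneg_right hPle (by positivity)
    clear_value A1 A2 M
    have harith := arith2 d n hd2 η δ hη hη1 hδ hδ1 hn
    have hu : ((A1 ∪ A2).card : ℝ) ≤ (A1.card : ℝ) + (A2.card : ℝ) := by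
      exact_mod_cast Finset.card_union_le A1 A2
    calc ((Finset.univ.filter (fun ω : Fin n → Fin d → Bool => ¬ Cond ω)).card : ℝ)
        ≤ ((A1 ∪ A2).card : ℝ) := by exact_mod_cast Finset.card_le_card hsub
    _ ≤ (A1.card : ℝ) + (A2.card : ℝ) := hu
    _ ≤ (d : ℝ) * (2 * M) + (d : ℝ)^2 * (2 * M) := add_le_add hcount1 hcount2
    _ = (2*(d:ℝ) + 2*(d:ℝ)^2) * M := by ring
    _ ≤ (4 * (d:ℝ)^2) * M :=
        mul_le_mul_of_nonneg_right (by
          have h := hdR; clear * - h; nlinarith [sq_nonneg ((d:ℝ)-1)]) hMnn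
    _ = 4 * (d:ℝ)^2 * M := by ring
    _ = (4 * (d:ℝ)^2 * Real.exp (-((n:ℝ)/(18*(d:ℝ)^2)))) * (2:ℝ)^(n*d) := by
          rw [hM]; ring
    _ ≤ δ * 2^(n*d) := mul_le_mul_of_nonneg_right harith (by positivity)
end
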